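/- (Uniform lower bound under the first-order inequality.) Suppose φ satisfies the stated assumption and let α > 0. Then there exists a constant θ > 0, depending only on α, φ and the vectors {G_i}_{i∈J}, such that every x ∈ ℝ^N satisfying Σ_{i∈S(x)} φ'(|G_iᵀ x|)·(G_iᵀ x / |G_iᵀ x|)·(G_iᵀ v) ≤ α‖v‖₂ for all v ∈ K(S(x)) has the lower bound property |G_jᵀ x| ≥ θ for every j ∈ S(x). (In the paper, α = β·Σ_{l=1}^M ‖(Aᵀ)_l‖₂, and every stationary point of the ℓ₁-fidelity model satisfies the first-order inequality, which yields the lower bound theory for that model.) -/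

import Mathlib

/-- The dot product `gᵀ x` of two vectors in `ℝ^N`. -/
noncomputable def dotp {N : ℕ} (g x : Fin N → ℝ) : ℝ := ∑ l, g l * x l

/-- The Euclidean norm `‖x‖₂` on `ℝ^N`. -/
noncomputable def norm2 {N : ℕ} (x : Fin N → ℝ) : ℝ := Real.sqrt (∑ l, (x l) ^ 2)

/-- Assumptions on the potential function `φ` (with derivative `φ'` on `(0,∞)`):
continuous, concave and coercive on `[0,∞)` with `φ(0) = 0`; continuously
differentiable on `(0,∞)` with positive derivative there, `φ'(0⁺) = +∞`, and
`φ'` Lipschitz on every `[α,∞)` with `α > 0`. -/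
structure PhiAssumption (φ φ' : ℝ → ℝ) : Prop where
  nonneg : ∀ t : ℝ, 0 ≤ t → 0 ≤ φ t
  zero : φ 0 = 0
  cont : ContinuousOn φ (Set.Ici 0)
  concave : ConcaveOn ℝ (Set.Ici 0) φ
  coercive : Filter.Tendsto φ Filter.atTop Filter.atTop
  hasDeriv : ∀ t : ℝ, 0 < t → HasDerivAt φ (φ' t) t
  derivCont : ContinuousOn φ' (Set.Ioi 0)
  derivPos : ∀ t : ℝ, 0 < t → 0 < φ' t
  derivAtZero : Filter.Tendsto φ' (nhdsWithin 0 (Set.Ioi 0)) Filter.atTop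
  derivLip : ∀ α : ℝ, 0 < α → ∃ L : ℝ, ∀ s : ℝ, α ≤ s → ∀ t : ℝ, α ≤ t →
    |φ' s - φ' t| ≤ L * |s - t|


lemma norm2_nonneg {N : ℕ} (x : Fin N → ℝ) : 0 ≤ norm2 x := Real.sqrt_nonneg _

lemma abs_dotp_le {N : ℕ} (g v : Fin N → ℝ) : |dotp g v| ≤ norm2 g * norm2 v := by
  have h := Finset.sum_mul_sq_le_sq_mul_sq Finset.univ g v
  have h2 : |dotp g v| = Real.sqrt ((dotp g v) ^ 2) := (Real.sqrt_sq_eq_abs _).symm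
  rw [h2, norm2, norm2, ← Real.sqrt_mul (by positivity)]
  exact Real.sqrt_le_sqrt h

lemma norm2_pos_of_dotp_ne {N : ℕ} {g u : Fin N → ℝ} (h : dotp g u ≠ 0) : 0 < norm2 u := by
  rcases (norm2_nonneg u).lt_or_eq with h' | h'
  · exact h'
  · exfalso
    apply h
    have := abs_dotp_le g u
    rw [← h', mul_zero] at this
    exact abs_eq_zero.mp (le_antisymm this (abs_nonneg _))

lemma phi'_anti {φ φ' : ℝ → ℝ} (hconc : ConcaveOn ℝ (Set.Ici 0) φ)
    (hd : ∀ t : ℝ, 0 < t → HasDerivAt φ (φ' t) t) :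
    ∀ s t : ℝ, 0 < s → s ≤ t → φ' t ≤ φ' s := by
  intro s t hs hst
  rcases hst.lt_or_eq with h | h
  · have h1 : φ' t ≤ slope φ s t :=
      hconc.le_slope_of_hasDerivAt hs.le (hs.trans h).le h (hd t (hs.trans h))
    have h2 : slope φ s t ≤ φ' s :=
      hconc.slope_le_of_hasDerivAt hs.le (hs.trans h).le h (hd s hs)
    linarith
  · rw [h]

lemma sgn_mul_self {d : ℝ} (hd : d ≠ 0) :
    (if decide (0 < d) then (1:ℝ) else -1) * d = |d| := by
  rcases lt_or_gt_of_ne hd with h | h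
  · simp [not_lt.mpr h.le, abs_of_neg h]
  · simp [h, abs_of_pos h]

lemma div_abs_eq_sgn {d : ℝ} (hd : d ≠ 0) :
    d / |d| = (if decide (0 < d) then (1:ℝ) else -1) := by
  rcases lt_or_gt_of_ne hd with h | h
  · simp [not_lt.mpr h.le, abs_of_neg h, div_neg, div_self hd]
  · simp [h, abs_of_pos h, div_self hd]

lemma exists_uniform_gordan {N : ℕ} {ι : Type} [Fintype ι] (G : ι → Fin N → ℝ) :
    ∃ c > (0:ℝ), ∀ (T Z : Finset ι) (σ : ι → Bool),
      (∃ u : Fin N → ℝ, (∀ i ∉ T, dotp (G i) u = 0) ∧ Z.Nonempty ∧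
          ∀ i ∈ Z, 0 < (if σ i then (1:ℝ) else -1) * dotp (G i) u) →
      ∃ v : Fin N → ℝ, (∀ i ∉ T, dotp (G i) v = 0) ∧ 0 < norm2 v ∧
          ∀ i ∈ Z, c * norm2 v ≤ (if σ i then (1:ℝ) else -1) * dotp (G i) v := by
  classical
  set Pat := Finset ι × Finset ι × (ι → Bool) with hPat
  let P : Pat → Prop := fun p => ∃ u : Fin N → ℝ,
      (∀ i ∉ p.1, dotp (G i) u = 0) ∧ p.2.1.Nonempty ∧
      ∀ i ∈ p.2.1, 0 < (if p.2.2 i then (1:ℝ) else -1) * dotp (G i) u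
  let c : Pat → ℝ := fun p =>
    if h : P p then
      p.2.1.inf' h.choose_spec.2.1
        (fun i => (if p.2.2 i then (1:ℝ) else -1) * dotp (G i) h.choose) / norm2 h.choose
    else 1
  have hcpos : ∀ p, 0 < c p := by
    intro p
    show 0 < dite _ _ _
    split
    · rename_i h
      obtain ⟨hK, hne, hpos⟩ := h.choose_spec
      obtain ⟨i0, hi0⟩ := hne
      have hu0 : dotp (G i0) h.choose ≠ 0 := by
        intro h0
        have := hpos i0 hi0
        rw [h0, mul_zero] at this
        exact lt_irrefl 0 this
      apply div_pos _ (norm2_pos_of_dotp_ne hu0)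
      rw [Finset.lt_inf'_iff]
      intro i hi
      exact hpos i hi
    · exact one_pos
  haveI : Nonempty Pat := ⟨(∅, ∅, fun _ => true)⟩
  refine ⟨Finset.univ.inf' Finset.univ_nonempty c, ?_, ?_⟩
  · show (0:ℝ) < _
    rw [Finset.lt_inf'_iff]
    intro p _
    exact hcpos p
  · intro T Z σ hp
    have hp' : P (T, Z, σ) := hp
    obtain ⟨hK, hne, hpos⟩ := hp'.choose_spec
    refine ⟨hp'.choose, hK, ?_, ?_⟩
    · obtain ⟨i0, hi0⟩ := hne
      refine norm2_pos_of_dotp_ne (g := G i0) ?_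
      intro h0
      have := hpos i0 hi0
      rw [h0, mul_zero] at this
      exact lt_irrefl 0 this
    · intro i hi
      have hcv : c (T, Z, σ) =
          Z.inf' hne (fun i => (if σ i then (1:ℝ) else -1) * dotp (G i) hp'.choose)
            / norm2 hp'.choose := dif_pos hp'
      have h1 : Finset.univ.inf' Finset.univ_nonempty c ≤ c (T, Z, σ) :=
        Finset.inf'_le c (Finset.mem_univ _)
      rw [hcv] at h1
      have h2 : Z.inf' hne (fun i => (if σ i then (1:ℝ) else -1) * dotp (G i) hp'.choose)
          ≤ (if σ i then (1:ℝ) else -1) * dotp (G i) hp'.choose := Finset.inf'_le _ hi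
      have hn : 0 < norm2 hp'.choose := by
        have := hpos i hi
        refine norm2_pos_of_dotp_ne (g := G i) ?_
        intro h0
        rw [h0, mul_zero] at this
        exact lt_irrefl 0 this
      calc Finset.univ.inf' Finset.univ_nonempty c * norm2 hp'.choose
          ≤ (Z.inf' hne (fun i => (if σ i then (1:ℝ) else -1) * dotp (G i) hp'.choose)
              / norm2 hp'.choose) * norm2 hp'.choose := by
            exact mul_le_mul_of_nonneg_right h1 hn.le
        _ = Z.inf' hne (fun i => (if σ i then (1:ℝ) else -1) * dotp (G i) hp'.choose) :=
            div_mul_cancel₀ _ hn.ne'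
        _ ≤ _ := h2

open Classical in
/-- uniform lower bound under the first-order inequality. For
`α > 0` there is `θ > 0`, depending only on `α`, `φ` and the vectors `{G_i}`,
such that every `x` satisfying the first-order inequality
`Σ_{i∈S(x)} φ'(|G_iᵀ x|)·(G_iᵀ x/|G_iᵀ x|)·(G_iᵀ v) ≤ α‖v‖₂` for all
`v ∈ K(S(x))` has `|G_jᵀ x| ≥ θ` for every `j ∈ S(x)`. -/
theorem lower_bound_from_first_order_inequality {N : ℕ} {ι : Type} [Fintype ι]
    (G : ι → Fin N → ℝ) (φ φ' : ℝ → ℝ) (hφ : PhiAssumption φ φ')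
    (α : ℝ) (hα : 0 < α) :
    ∃ θ > (0 : ℝ), ∀ x : Fin N → ℝ,
      (∀ v : Fin N → ℝ, (∀ i : ι, dotp (G i) x = 0 → dotp (G i) v = 0) →
        (∑ i ∈ Finset.univ.filter (fun i : ι => dotp (G i) x ≠ 0),
          φ' |dotp (G i) x| * (dotp (G i) x / |dotp (G i) x|) * dotp (G i) v)
        ≤ α * norm2 v) →
      ∀ j : ι, dotp (G j) x ≠ 0 → θ ≤ |dotp (G j) x| := by
  classical
  obtain ⟨c, hc, hgordan⟩ := exists_uniform_gordan G
  set Γ : ℝ := ∑ i : ι, norm2 (G i) with hΓ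
  have hΓ0 : 0 ≤ Γ := Finset.sum_nonneg fun i _ => norm2_nonneg _
  have hφ1 : 0 < φ' 1 := hφ.derivPos 1 one_pos
  set A : ℝ := (α + φ' 1 * Γ) / c with hA
  have hev : ∀ᶠ t in nhdsWithin 0 (Set.Ioi 0), A < φ' t :=
    hφ.derivAtZero.eventually_gt_atTop A
  rw [eventually_nhdsWithin_iff, Metric.eventually_nhds_iff] at hev
  obtain ⟨ε, hε, hball⟩ := hev
  refine ⟨min ε 1, lt_min hε one_pos, fun x hx j hj => ?_⟩
  by_contra hcon
  push_neg at hcon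
  set d : ι → ℝ := fun i => dotp (G i) x with hd
  set Sx : Finset ι := Finset.univ.filter (fun i : ι => dotp (G i) x ≠ 0) with hSx
  set Z : Finset ι := Finset.univ.filter
      (fun i : ι => dotp (G i) x ≠ 0 ∧ |dotp (G i) x| < 1) with hZ
  set σ : ι → Bool := fun i => decide (0 < dotp (G i) x) with hσ
  have hjZ : j ∈ Z := by
    rw [hZ, Finset.mem_filter]
    exact ⟨Finset.mem_univ _, hj, lt_of_lt_of_le hcon (min_le_right _ _)⟩
  have hZS : Z ⊆ Sx := by
    intro i hi
    rw [hZ, Finset.mem_filter] at hi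
    rw [hSx, Finset.mem_filter]
    exact ⟨Finset.mem_univ _, hi.2.1⟩
  have hgood : ∃ u : Fin N → ℝ, (∀ i ∉ Sx, dotp (G i) u = 0) ∧ Z.Nonempty ∧
      ∀ i ∈ Z, 0 < (if σ i then (1:ℝ) else -1) * dotp (G i) u := by
    refine ⟨x, ?_, ⟨j, hjZ⟩, ?_⟩
    · intro i hi
      rw [hSx, Finset.mem_filter] at hi
      push_neg at hi
      exact hi (Finset.mem_univ _)
    · intro i hi
      rw [hZ, Finset.mem_filter] at hi
      rw [hσ]
      rw [sgn_mul_self hi.2.1]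
      exact abs_pos.mpr hi.2.1
  obtain ⟨v, hvK, hvpos, hvlb⟩ := hgordan Sx Z σ hgood
  have hsum := hx v (by
    intro i h0
    refine hvK i ?_
    rw [hSx, Finset.mem_filter]
    push_neg
    intro _
    exact h0)
  -- rewrite each summand
  have hterm : ∀ i ∈ Sx,
      φ' |dotp (G i) x| * (dotp (G i) x / |dotp (G i) x|) * dotp (G i) v
        = φ' |dotp (G i) x| * ((if σ i then (1:ℝ) else -1) * dotp (G i) v) := by
    intro i hi
    rw [hSx, Finset.mem_filter] at hi
    rw [hσ, div_abs_eq_sgn hi.2, mul_assoc]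
  have hsum' : (∑ i ∈ Sx,
      φ' |dotp (G i) x| * ((if σ i then (1:ℝ) else -1) * dotp (G i) v)) ≤ α * norm2 v := by
    rw [← Finset.sum_congr rfl hterm]
    exact hsum
  have hZlb : φ' |dotp (G j) x| * (c * norm2 v) ≤
      ∑ i ∈ Z, φ' |dotp (G i) x| * ((if σ i then (1:ℝ) else -1) * dotp (G i) v) := by
    have hnn : ∀ i ∈ Z,
        0 ≤ φ' |dotp (G i) x| * ((if σ i then (1:ℝ) else -1) * dotp (G i) v) := by
      intro i hi
      have hi' := hi
      rw [hZ, Finset.mem_filter] at hi'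
      have hp := hφ.derivPos _ (abs_pos.mpr hi'.2.1)
      have := le_trans (by positivity : (0:ℝ) ≤ c * norm2 v) (hvlb i hi)
      positivity
    have hj' : φ' |dotp (G j) x| * (c * norm2 v) ≤
        φ' |dotp (G j) x| * ((if σ j then (1:ℝ) else -1) * dotp (G j) v) :=
      mul_le_mul_of_nonneg_left (hvlb j hjZ) (hφ.derivPos _ (abs_pos.mpr hj)).le
    exact le_trans hj' (Finset.single_le_sum hnn hjZ)
  have hBlb : -(φ' 1 * Γ * norm2 v) ≤
      ∑ i ∈ Sx \ Z, φ' |dotp (G i) x| * ((if σ i then (1:ℝ) else -1) * dotp (G i) v) := by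
    have h1 : ∀ i ∈ Sx \ Z,
        -(φ' 1 * (norm2 (G i) * norm2 v)) ≤
          φ' |dotp (G i) x| * ((if σ i then (1:ℝ) else -1) * dotp (G i) v) := by
      intro i hi
      rw [Finset.mem_sdiff, hSx, hZ, Finset.mem_filter, Finset.mem_filter] at hi
      have hne : dotp (G i) x ≠ 0 := hi.1.2
      have h1le : (1:ℝ) ≤ |dotp (G i) x| := by
        by_contra hlt
        push_neg at hlt
        exact hi.2 ⟨Finset.mem_univ _, hne, hlt⟩
      have hpp := hφ.derivPos _ (abs_pos.mpr hne)
      have hle1 : φ' |dotp (G i) x| ≤ φ' 1 :=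
        phi'_anti hφ.concave hφ.hasDeriv 1 _ one_pos h1le
      have habs : |(if σ i then (1:ℝ) else -1) * dotp (G i) v| ≤ norm2 (G i) * norm2 v := by
        rw [abs_mul]
        have : |(if σ i then (1:ℝ) else -1)| = 1 := by split <;> simp
        rw [this, one_mul]
        exact abs_dotp_le _ _
      have := neg_abs_le (φ' |dotp (G i) x| * ((if σ i then (1:ℝ) else -1) * dotp (G i) v))
      refine le_trans ?_ this
      rw [abs_mul, abs_of_pos hpp]
      have hmul : φ' |dotp (G i) x| * |(if σ i then (1:ℝ) else -1) * dotp (G i) v| ≤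
          φ' 1 * (norm2 (G i) * norm2 v) := by
        apply mul_le_mul hle1 habs (abs_nonneg _) hφ1.le
      linarith
    calc -(φ' 1 * Γ * norm2 v)
        ≤ ∑ i ∈ Sx \ Z, -(φ' 1 * (norm2 (G i) * norm2 v)) := by
          rw [Finset.sum_neg_distrib, neg_le_neg_iff]
          have : ∑ i ∈ Sx \ Z, φ' 1 * (norm2 (G i) * norm2 v)
              = φ' 1 * (∑ i ∈ Sx \ Z, norm2 (G i)) * norm2 v := by
            rw [Finset.mul_sum, Finset.sum_mul]
            apply Finset.sum_congr rfl
            intro i _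
            ring
          rw [this]
          have hsub : ∑ i ∈ Sx \ Z, norm2 (G i) ≤ Γ := by
            rw [hΓ]
            apply Finset.sum_le_sum_of_subset_of_nonneg (Finset.subset_univ _)
            intro i _ _
            exact norm2_nonneg _
          have := mul_le_mul_of_nonneg_right
            (mul_le_mul_of_nonneg_left hsub hφ1.le) (norm2_nonneg v)
          linarith
      _ ≤ _ := Finset.sum_le_sum h1
  have hsplit : (∑ i ∈ Sx \ Z, φ' |dotp (G i) x| * ((if σ i then (1:ℝ) else -1) * dotp (G i) v))
      + ∑ i ∈ Z, φ' |dotp (G i) x| * ((if σ i then (1:ℝ) else -1) * dotp (G i) v)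
      = ∑ i ∈ Sx, φ' |dotp (G i) x| * ((if σ i then (1:ℝ) else -1) * dotp (G i) v) :=
    Finset.sum_sdiff hZS
  have hfinal : φ' |dotp (G j) x| * c * norm2 v ≤ (α + φ' 1 * Γ) * norm2 v := by
    nlinarith [hsum', hZlb, hBlb, hsplit]
  have hce : φ' |dotp (G j) x| ≤ A := by
    rw [hA, le_div_iff₀ hc]
    have := (mul_le_mul_iff_of_pos_right hvpos).mp hfinal
    linarith
  have hlt : A < φ' |dotp (G j) x| := by
    apply hball
    · rw [Real.dist_eq, sub_zero, abs_abs]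
      exact lt_of_lt_of_le hcon (min_le_left _ _)
    · exact abs_pos.mpr hj
  linarith
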